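/- arXiv:2410.22717 — 4 statements merged into one kernel-verified Lean document; each statement's English description precedes it below -/
import Mathlib

section
/- Let w be a consistent (negative-cycle-free) weight function on G, and suppose the weight of edge e = (u,v) is changed to a new value c, yielding w'. Then w' admits a negative cycle if and only if c + d_vu < 0, where d_vu is the weight of a shortest v-to-u path with respect to w. -/
set_option linter.unusedSectionVars false


/-- Weight of a path given as a list of vertices: sum of weights of consecutive pairs. -/
def pathWeight {V : Type*} (w : V → V → ℝ) (l : List V) : ℝ :=
  ((l.zip l.tail).map fun p => w p.1 p.2).sum

/-- `l` is a directed path (walk) from `u` to `v` in the graph with edge relation `E`. -/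
def IsUVPath {V : Type*} (E : V → V → Prop) (u v : V) (l : List V) : Prop :=
  l ≠ [] ∧ l.Chain' E ∧ l.head? = some u ∧ l.getLast? = some v

/-- `l` is a directed cycle (closed walk): consecutive pairs are edges and it starts
and ends at the same vertex, traversing at least one edge. -/
def IsCycle {V : Type*} (E : V → V → Prop) (l : List V) : Prop :=
  2 ≤ l.length ∧ l.Chain' E ∧ l.head? = l.getLast?

/-- `w` is consistent with the graph `E`: no directed cycle has negative total weight. -/
def Consistent {V : Type*} (E : V → V → Prop) (w : V → V → ℝ) : Prop :=
  ∀ l, IsCycle E l → 0 ≤ pathWeight w l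

namespace Aux
variable {V : Type*} [DecidableEq V]

lemma pw_nil (w : V → V → ℝ) : pathWeight w [] = 0 := rfl

lemma pw_single (w : V → V → ℝ) (a : V) : pathWeight w [a] = 0 := rfl

lemma pw_cons_cons (w : V → V → ℝ) (a b : V) (t : List V) :
    pathWeight w (a :: b :: t) = w a b + pathWeight w (b :: t) := by
  simp [pathWeight]

lemma pw_split (w : V → V → ℝ) (A : List V) (x : V) (B : List V) :
    pathWeight w (A ++ x :: B) = pathWeight w (A ++ [x]) + pathWeight w (x :: B) := by
  induction A with
  | nil => simp [pw_single]
  | cons a A ih =>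
    cases A with
    | nil => simp [pw_cons_cons, pw_single]
    | cons b A' =>
      simp only [List.cons_append, pw_cons_cons] at *
      rw [ih]; ring

lemma pw_glue (w : V → V → ℝ) {A : List V} {x : V} (B : List V)
    (h : A.getLast? = some x) :
    pathWeight w (A ++ B) = pathWeight w A + pathWeight w (x :: B) := by
  induction A with
  | nil => simp at h
  | cons a A ih =>
    cases A with
    | nil =>
      simp at h
      subst h
      simp [pw_single]
    | cons b A' =>
      rw [List.getLast?_cons_cons] at h
      have := ih h
      simp only [List.cons_append, pw_cons_cons] at *
      rw [this]; ring

lemma chain'_glue {E : V → V → Prop} {A : List V} {x : V} {B : List V}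
    (hA : A.Chain' E) (hx : (x :: B).Chain' E) (h : A.getLast? = some x) :
    (A ++ B).Chain' E := by
  rw [List.Chain', List.isChain_append]
  refine ⟨hA, (List.isChain_cons.mp hx).2, ?_⟩
  intro a ha b hb
  rw [h, Option.mem_some_iff] at ha
  subst ha
  exact (List.isChain_cons.mp hx).1 b hb

lemma pw_eq_of_no_uv (w w' : V → V → ℝ) (u v : V) (c : ℝ)
    (hw' : ∀ a b, w' a b = if a = u ∧ b = v then c else w a b) :
    ∀ l : List V, (∀ C D, l ≠ C ++ u :: v :: D) → pathWeight w' l = pathWeight w l := by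
  intro l
  induction l with
  | nil => intro _; rfl
  | cons a t ih =>
    intro h
    cases t with
    | nil => rfl
    | cons b t' =>
      have hab : ¬(a = u ∧ b = v) := by
        rintro ⟨rfl, rfl⟩
        exact h [] t' rfl
      have ht : ∀ C D, b :: t' ≠ C ++ u :: v :: D := by
        intro C D hCD
        exact h (a :: C) D (by simp [hCD])
      rw [pw_cons_cons, pw_cons_cons, hw', if_neg hab, ih ht]

lemma pw_mono {w w' : V → V → ℝ} (h : ∀ a b, w' a b ≤ w a b) (l : List V) :
    pathWeight w' l ≤ pathWeight w l :=
  List.sum_le_sum (fun p _ => h p.1 p.2)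

/-- Key lemma: a `v → u` path of negative `c`-augmented `w'`-weight yields one
whose `w`-weight is also `c`-negative. -/
lemma keyA {E : V → V → Prop} {w w' : V → V → ℝ} {u v : V} {c : ℝ}
    (hw' : ∀ a b, w' a b = if a = u ∧ b = v then c else w a b) :
    ∀ n (l : List V), l.length ≤ n → IsUVPath E v u l → c + pathWeight w' l < 0 →
      ∃ p, IsUVPath E v u p ∧ c + pathWeight w p < 0 := by
  intro n
  induction n with
  | zero =>
    intro l hlen hl _
    rcases hl with ⟨hne, -⟩
    cases l with
    | nil => exact absurd rfl hne
    | cons a t => simp at hlen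
  | succ n ih =>
    intro l hlen hl hneg
    by_cases hdec : ∃ C D, l = C ++ u :: v :: D
    · obtain ⟨C, D, rfl⟩ := hdec
      obtain ⟨hne, hch, hhd, hlast⟩ := hl
      -- chain facts
      rw [List.Chain', List.isChain_append] at hch
      obtain ⟨hchC, hchUVD, hjunc⟩ := hch
      have hchq1 : (C ++ [u]).Chain' E := by
        rw [List.Chain', List.isChain_append]
        exact ⟨hchC, List.isChain_singleton u, by
          intro x hx y hy
          simp at hy; subst hy
          exact hjunc x hx u rfl⟩
      have hchq2 : (v :: D).Chain' E := (List.isChain_cons.mp hchUVD).2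
      -- endpoints
      have hq1 : IsUVPath E v u (C ++ [u]) := by
        refine ⟨by simp, hchq1, ?_, List.getLast?_concat (l := C)⟩
        cases C with
        | nil => simpa using hhd
        | cons c0 C' => simpa using hhd
      have hq2 : IsUVPath E v u (v :: D) := by
        refine ⟨by simp, hchq2, rfl, ?_⟩
        rw [List.getLast?_append] at hlast
        simpa using hlast
      -- weight split
      have hsplit : pathWeight w' (C ++ u :: v :: D)
          = pathWeight w' (C ++ [u]) + c + pathWeight w' (v :: D) := by
        rw [pw_split, pw_cons_cons, hw', if_pos ⟨rfl, rfl⟩]; ring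
      -- lengths
      have hlen1 : (C ++ [u]).length ≤ n := by
        simp only [List.length_append, List.length_cons, List.length_nil] at hlen ⊢
        omega
      have hlen2 : (v :: D).length ≤ n := by
        simp only [List.length_append, List.length_cons] at hlen ⊢
        omega
      rw [hsplit] at hneg
      by_cases h1 : c + pathWeight w' (C ++ [u]) < 0
      · exact ih _ hlen1 hq1 h1
      · exact ih _ hlen2 hq2 (by push_neg at h1; linarith)
    · push_neg at hdec
      exact ⟨l, hl, by rwa [← pw_eq_of_no_uv w w' u v c hw' l hdec]⟩

lemma cycle_cons {E : V → V → Prop} {u v : V} {l : List V} (he : E u v)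
    (hl : IsUVPath E v u l) :
    IsCycle E (u :: l) ∧ ∀ ω : V → V → ℝ, pathWeight ω (u :: l) = ω u v + pathWeight ω l := by
  obtain ⟨hne, hch, hhd, hlast⟩ := hl
  cases l with
  | nil => exact absurd rfl hne
  | cons a t =>
    have ha : v = a := by simpa using hhd.symm
    subst ha
    refine ⟨⟨by simp, ?_, ?_⟩, fun ω => pw_cons_cons ω u v t⟩
    · exact List.isChain_cons.mpr ⟨fun y hy => by simp at hy; subst hy; exact he, hch⟩
    · rw [List.getLast?_cons_cons, hlast]; rfl

end Aux

open Aux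

/-- Changing the weight of edge `(u,v)` to `c` creates a negative cycle iff
`c + d_vu < 0`, where `d_vu` is the shortest `v`-to-`u` distance w.r.t. `w`
(`+∞` in `EReal` if `u` is unreachable from `v`). -/
theorem stmt4 {V : Type*} [DecidableEq V] (E : V → V → Prop) (w : V → V → ℝ)
    (hcons : Consistent E w) (u v : V) (he : E u v) (c : ℝ)
    (w' : V → V → ℝ)
    (hw' : ∀ a b, w' a b = if a = u ∧ b = v then c else w a b)
    (d : EReal)
    (hd : d = sInf {r : EReal | ∃ l, IsUVPath E v u l ∧ ((pathWeight w l : ℝ) : EReal) = r}) :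
    (∃ l, IsCycle E l ∧ pathWeight w' l < 0) ↔ (c : EReal) + d < 0 := by
  constructor
  · rintro ⟨l, hcyc, hneg⟩
    -- find a v→u path p with no use of edge (u,v) and c + pathWeight w p < 0
    have hmain : ∃ p, IsUVPath E v u p ∧ c + pathWeight w p < 0 := by
      by_cases hdec : ∃ C D, l = C ++ u :: v :: D
      · obtain ⟨C, D, rfl⟩ := hdec
        obtain ⟨hlen2, hch, hhl⟩ := hcyc
        rw [List.Chain', List.isChain_append] at hch
        obtain ⟨hchC, hchUVD, hjunc⟩ := hch
        have hchq2 : (v :: D).Chain' E := (List.isChain_cons.mp hchUVD).2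
        cases C with
        | nil =>
          -- l = u :: v :: D, cycle from u back to u
          have hlast : (v :: D).getLast? = some u := by
            have := hhl
            simp only [List.nil_append, List.getLast?_cons_cons] at this
            exact this.symm
          have hq : IsUVPath E v u (v :: D) := ⟨by simp, hchq2, rfl, hlast⟩
          exact keyA hw' _ _ le_rfl hq (by
            have h2 := pw_cons_cons w' u v D
            rw [hw', if_pos ⟨rfl, rfl⟩] at h2
            simp only [List.nil_append] at hneg
            linarith)
        | cons c0 C' =>
          have hhd : ((c0 :: C') ++ u :: v :: D).head? = some c0 := rfl
          have hlastl : ((c0 :: C') ++ u :: v :: D).getLast? = some c0 := by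
            rw [← hhl]; rfl
          have hlastvd : (v :: D).getLast? = some c0 := by
            rw [List.getLast?_append, List.getLast?_cons_cons] at hlastl
            cases hD : (v :: D).getLast? with
            | none => rw [List.getLast?_eq_none_iff] at hD; cases hD
            | some x =>
              rw [hD] at hlastl
              simp only [Option.or] at hlastl
              exact hlastl
          have hchq1 : ((c0 :: C') ++ [u]).Chain' E := by
            rw [List.Chain', List.isChain_append]
            exact ⟨hchC, List.isChain_singleton u, by
              intro x hx y hy
              simp at hy; subst hy
              exact hjunc x hx u rfl⟩
          set p' : List V := (v :: D) ++ (C' ++ [u]) with hp'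
          have hchp' : p'.Chain' E := by
            refine chain'_glue hchq2 ?_ hlastvd
            simpa using hchq1
          have hq : IsUVPath E v u p' := by
            refine ⟨by simp [hp'], hchp', rfl, ?_⟩
            rw [hp', List.getLast?_append, List.getLast?_concat]
            rfl
          have hwsplit : pathWeight w' ((c0 :: C') ++ u :: v :: D)
              = pathWeight w' ((c0 :: C') ++ [u]) + c + pathWeight w' (v :: D) := by
            rw [pw_split, pw_cons_cons, hw', if_pos ⟨rfl, rfl⟩]; ring
          have hwp' : pathWeight w' p'
              = pathWeight w' (v :: D) + pathWeight w' (c0 :: (C' ++ [u])) := by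
            exact pw_glue w' (C' ++ [u]) hlastvd
          have hneg' : c + pathWeight w' p' < 0 := by
            rw [hwp']
            rw [hwsplit] at hneg
            have : pathWeight w' (c0 :: (C' ++ [u])) = pathWeight w' ((c0 :: C') ++ [u]) := rfl
            rw [this]
            linarith
          exact keyA hw' _ _ le_rfl hq hneg'
      · push_neg at hdec
        rw [pw_eq_of_no_uv w w' u v c hw' l hdec] at hneg
        exact absurd (hcons l hcyc) (not_le.mpr hneg)
    obtain ⟨p, hp, hpneg⟩ := hmain
    have hmem : ((pathWeight w p : ℝ) : EReal) ∈
        {r : EReal | ∃ l, IsUVPath E v u l ∧ ((pathWeight w l : ℝ) : EReal) = r} :=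
      ⟨p, hp, rfl⟩
    have hdle : d ≤ ((pathWeight w p : ℝ) : EReal) := hd ▸ sInf_le hmem
    calc (c : EReal) + d ≤ (c : EReal) + ((pathWeight w p : ℝ) : EReal) :=
          add_le_add_right hdle _
      _ = ((c + pathWeight w p : ℝ) : EReal) := (EReal.coe_add _ _).symm
      _ < 0 := by exact_mod_cast hpneg
  · intro h
    -- lower bound on d
    have hlb : ((-(w u v) : ℝ) : EReal) ≤ d := by
      rw [hd]
      refine le_sInf ?_
      rintro r ⟨l, hl, rfl⟩
      obtain ⟨hcyc, hweq⟩ := cycle_cons he hl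
      have h0 : 0 ≤ pathWeight w (u :: l) := hcons _ hcyc
      rw [hweq w] at h0
      exact EReal.coe_le_coe_iff.mpr (by linarith)
    have hcle : c ≤ w u v := by
      have h1 : ((c + -(w u v) : ℝ) : EReal) < 0 := by
        calc ((c + -(w u v) : ℝ) : EReal) = (c : EReal) + ((-(w u v) : ℝ) : EReal) :=
              EReal.coe_add _ _
          _ ≤ (c : EReal) + d := add_le_add_right hlb _
          _ < 0 := h
      have : c + -(w u v) < 0 := by exact_mod_cast h1
      linarith
    have hdlt : d < ((-c : ℝ) : EReal) := by
      by_contra h'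
      push_neg at h'
      have : (0 : EReal) ≤ (c : EReal) + d := by
        calc (0 : EReal) = ((c + -c : ℝ) : EReal) := by norm_num
          _ = (c : EReal) + ((-c : ℝ) : EReal) := EReal.coe_add _ _
          _ ≤ (c : EReal) + d := add_le_add_right h' _
      exact absurd h (not_lt.mpr this)
    rw [hd] at hdlt
    obtain ⟨r, ⟨l, hl, rfl⟩, hrlt⟩ := sInf_lt_iff.mp hdlt
    have hlt : pathWeight w l < -c := EReal.coe_lt_coe_iff.mp hrlt
    obtain ⟨hcyc, hweq⟩ := cycle_cons he hl
    refine ⟨u :: l, hcyc, ?_⟩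
    have hmono : pathWeight w' l ≤ pathWeight w l := by
      refine pw_mono (fun a b => ?_) l
      rw [hw']
      split_ifs with hab
      · obtain ⟨rfl, rfl⟩ := hab; exact hcle
      · exact le_rfl
    rw [hweq w', hw', if_pos ⟨rfl, rfl⟩]
    linarith
end

section
/- Let φ be a feasible potential for (G, w), let the weight of edge (u,v) be decreased yielding w' with new potential weight w'_φ(u,v), and suppose w' has no negative cycle. Define φ'(x) = φ(x) + max{0, -w'_φ(u,v) - D(x)}, where D(x) is the shortest v-to-x path distance with respect to w_φ. Then φ' is a feasible potential for (G, w'). -/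
lemma pw_single {V : Type*} (w : V → V → ℝ) (a : V) : pathWeight w [a] = 0 := rfl

lemma pw_cons_cons {V : Type*} (w : V → V → ℝ) (a b : V) (l : List V) :
    pathWeight w (a :: b :: l) = w a b + pathWeight w (b :: l) := by
  simp [pathWeight]

lemma pw_nonneg {V : Type*} (E : V → V → Prop) (w : V → V → ℝ)
    (hnn : ∀ a b, E a b → 0 ≤ w a b) :
    ∀ (a : V) (l : List V), (a :: l).Chain' E → 0 ≤ pathWeight w (a :: l) := by
  intro a l
  induction l generalizing a with
  | nil => intro _; simp [pw_single]
  | cons b l ih =>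
    intro h
    rw [pw_cons_cons]
    have h1 := List.isChain_cons_cons.mp h
    exact add_nonneg (hnn _ _ h1.1) (ih b h1.2)

lemma pw_mono {V : Type*} (w1 w2 : V → V → ℝ) (hle : ∀ a b, w1 a b ≤ w2 a b) :
    ∀ (a : V) (l : List V), pathWeight w1 (a :: l) ≤ pathWeight w2 (a :: l) := by
  intro a l
  induction l generalizing a with
  | nil => simp [pw_single]
  | cons b l ih =>
    rw [pw_cons_cons, pw_cons_cons]
    exact add_le_add (hle a b) (ih b)

lemma pw_append_single {V : Type*} (w : V → V → ℝ) :
    ∀ (a : V) (l : List V) (b : V),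
      pathWeight w (a :: l ++ [b]) =
        pathWeight w (a :: l) + w ((a :: l).getLast (by simp)) b := by
  intro a l
  induction l generalizing a with
  | nil => intro b; simp [pw_single, pw_cons_cons]
  | cons x l ih =>
    intro b
    have := ih x b
    simp only [List.cons_append, pw_cons_cons] at *
    rw [this]
    ring_nf
    congr 1

lemma pw_tele {V : Type*} (w : V → V → ℝ) (φ : V → ℝ) :
    ∀ (a : V) (l : List V),
      pathWeight (fun x y => w x y + φ y - φ x) (a :: l) =
        pathWeight w (a :: l) + φ ((a :: l).getLast (by simp)) - φ a := by
  intro a l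
  induction l generalizing a with
  | nil => simp [pw_single]
  | cons b l ih =>
    rw [pw_cons_cons, pw_cons_cons, ih b]
    simp only [List.getLast_cons (by simp : (b :: l) ≠ [])]
    ring

/-- Potential update after a weight decrease on edge `(u,v)` (forward version):
`φ'(x) = φ(x) + max{0, -w'_φ(u,v) - D(x)}` is feasible for `(G, w')`, where `D(x)`
is the shortest `v`-to-`x` distance w.r.t. `w_φ` (`+∞` if unreachable). -/
theorem stmt6 {V : Type*} (E : V → V → Prop) (w : V → V → ℝ) (φ : V → ℝ)
    (hfeas : ∀ a b, E a b → 0 ≤ w a b + φ b - φ a)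
    (u v : V) (he : E u v) (w' : V → V → ℝ)
    (hdec : w' u v ≤ w u v)
    (hw' : ∀ a b, ¬(a = u ∧ b = v) → w' a b = w a b)
    (hnoneg : Consistent E w')
    (D : V → EReal)
    (hD : ∀ x, D x = sInf {r : EReal | ∃ l, IsUVPath E v x l ∧
      ((pathWeight (fun a b => w a b + φ b - φ a) l : ℝ) : EReal) = r})
    (φ' : V → ℝ)
    (hφ' : ∀ x, φ' x = φ x +
      (max 0 (((-(w' u v + φ v - φ u) : ℝ) : EReal) - D x)).toReal) :
    ∀ a b, E a b → 0 ≤ w' a b + φ' b - φ' a := by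
  intro a b hab
  have hwle : ∀ x y, w' x y ≤ w x y := by
    intro x y; by_cases h : x = u ∧ y = v
    · obtain ⟨rfl, rfl⟩ := h; exact hdec
    · rw [hw' x y h]
  have hD0 : ∀ x, 0 ≤ D x := by
    intro x; rw [hD]; apply le_sInf
    rintro r ⟨l, ⟨hne, hch, -, -⟩, rfl⟩
    obtain ⟨x0, l', rfl⟩ := List.exists_cons_of_ne_nil hne
    exact_mod_cast pw_nonneg E _ (fun p q h => hfeas p q h) x0 l' hch
  set c : ℝ := -(w' u v + φ v - φ u) with hc
  -- basic facts about the max expressions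
  have hmle : ∀ x, max 0 ((c : EReal) - D x) ≤ ((max 0 c : ℝ) : EReal) := by
    intro x
    apply max_le
    · exact EReal.coe_nonneg.mpr (le_max_left 0 c)
    · calc (c : EReal) - D x ≤ (c : EReal) - 0 := EReal.sub_le_sub le_rfl (hD0 x)
        _ = (c : EReal) := by rw [sub_zero]
        _ ≤ _ := EReal.coe_le_coe_iff.mpr (le_max_right 0 c)
  have hmtop : ∀ x, max 0 ((c : EReal) - D x) ≠ ⊤ :=
    fun x => ((hmle x).trans_lt (EReal.coe_lt_top _)).ne
  have hm0 : ∀ x, (0 : EReal) ≤ max 0 ((c : EReal) - D x) := fun x => le_max_left _ _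
  have hmbot : ∀ x, max 0 ((c : EReal) - D x) ≠ ⊥ :=
    fun x => ((lt_of_lt_of_le (by simp) (hm0 x))).ne'
  have hmcoe : ∀ x, (((max 0 ((c : EReal) - D x)).toReal : ℝ) : EReal)
      = max 0 ((c : EReal) - D x) := fun x => EReal.coe_toReal (hmtop x) (hmbot x)
  have hδ0 : ∀ x, 0 ≤ (max 0 ((c : EReal) - D x)).toReal := by
    intro x
    have := EReal.toReal_le_toReal (hm0 x) (by simp) (hmtop x)
    simpa using this
  have hDv : D v = 0 := by
    refine le_antisymm ?_ (hD0 v)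
    have hmem : ((pathWeight (fun a b => w a b + φ b - φ a) [v] : ℝ) : EReal) ∈
        {r : EReal | ∃ l, IsUVPath E v v l ∧
          ((pathWeight (fun a b => w a b + φ b - φ a) l : ℝ) : EReal) = r} :=
      ⟨[v], ⟨by simp, List.isChain_singleton _, rfl, rfl⟩, rfl⟩
    have := sInf_le hmem
    rw [← hD] at this
    simpa [pw_single] using this
  have hDu : (c : EReal) ≤ D u := by
    rw [hD]; apply le_sInf
    rintro r ⟨l, ⟨hne, hch, hhd, hlast⟩, rfl⟩
    obtain ⟨x0, l', rfl⟩ := List.exists_cons_of_ne_nil hne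
    have hx0 : x0 = v := by simpa using hhd
    subst x0
    have hlast' : (v :: l').getLast (by simp) = u := by
      rw [List.getLast?_eq_getLast_of_ne_nil (by simp)] at hlast
      simpa using hlast
    have hcyc : IsCycle E ((v :: l') ++ [v]) := by
      refine ⟨by simp, ?_, ?_⟩
      · show List.IsChain E _; rw [List.isChain_append]
        refine ⟨hch, by simp, ?_⟩
        intro x hx y hy
        simp only [List.head?_cons, Option.mem_some_iff] at hy
        rw [List.getLast?_eq_getLast_of_ne_nil (by simp)] at hx
        simp only [Option.mem_some_iff] at hx
        subst hx; subst hy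
        rw [hlast']; exact he
      · rw [List.getLast?_append_cons]; simp
    have h0 := hnoneg _ hcyc
    rw [pw_append_single w' v l' v, hlast'] at h0
    have hmono := pw_mono w' w hwle v l'
    have htele := pw_tele w φ v l'
    rw [hlast'] at htele
    rw [EReal.coe_le_coe_iff, htele]
    rw [hc]
    linarith
  have hmu : max 0 ((c : EReal) - D u) = 0 := by
    apply max_eq_left
    apply EReal.sub_le_of_le_add
    simpa using hDu
  have hmv : max 0 ((c : EReal) - D v) = ((max 0 c : ℝ) : EReal) := by
    rw [hDv, sub_zero]
    rcases le_total 0 c with h | h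
    · rw [max_eq_right (show (0:EReal) ≤ (c:ℝ) from by exact_mod_cast h),
        max_eq_right h]
    · rw [max_eq_left (show ((c:ℝ):EReal) ≤ 0 from by exact_mod_cast h), max_eq_left h]
      simp
  by_cases hcase : a = u ∧ b = v
  · obtain ⟨rfl, rfl⟩ := hcase
    rw [hφ' a, hφ' b, hmu, hmv]
    simp only [EReal.toReal_zero, EReal.toReal_coe]
    rcases le_total 0 c with h | h
    · rw [max_eq_right h]; linarith [hc.le, hc.ge]
    · rw [max_eq_left h]; linarith [hc.le, hc.ge]
  · have hw : w' a b = w a b := hw' a b hcase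
    have hk : 0 ≤ w a b + φ b - φ a := hfeas a b hab
    set δb : ℝ := (max 0 ((c : EReal) - D b)).toReal with hδb
    have key : max 0 ((c : EReal) - D a) ≤ (((w a b + φ b - φ a) + δb : ℝ) : EReal) := by
      apply max_le
      · exact EReal.coe_nonneg.mpr (add_nonneg hk (hδ0 b))
      · have hDa : ((c - ((w a b + φ b - φ a) + δb) : ℝ) : EReal) ≤ D a := by
          rw [hD]; apply le_sInf
          rintro r ⟨l, ⟨hne, hch, hhd, hlast⟩, rfl⟩
          obtain ⟨x0, l', rfl⟩ := List.exists_cons_of_ne_nil hne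
          have hx0 : x0 = v := by simpa using hhd
          subst x0
          have hlast' : (v :: l').getLast (by simp) = a := by
            rw [List.getLast?_eq_getLast_of_ne_nil (by simp)] at hlast
            simpa using hlast
          have hchain : ((v :: l') ++ [b]).Chain' E := by
            show List.IsChain E _; rw [List.isChain_append]
            refine ⟨hch, by simp, ?_⟩
            intro x hx y hy
            simp only [List.head?_cons, Option.mem_some_iff] at hy
            rw [List.getLast?_eq_getLast_of_ne_nil (by simp)] at hx
            simp only [Option.mem_some_iff] at hx
            subst hx; subst hy
            rw [hlast']; exact hab
          have hmem : ((pathWeight (fun x y => w x y + φ y - φ x) ((v :: l') ++ [b]) : ℝ)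
              : EReal) ∈ {r : EReal | ∃ l, IsUVPath E v b l ∧
              ((pathWeight (fun a b => w a b + φ b - φ a) l : ℝ) : EReal) = r} :=
            ⟨(v :: l') ++ [b], ⟨by simp, hchain, by simp, by rw [List.getLast?_append_cons]; simp⟩, rfl⟩
          have hDb : D b ≤ ((pathWeight (fun x y => w x y + φ y - φ x) ((v :: l') ++ [b]) : ℝ)
              : EReal) := by rw [hD b]; exact sInf_le hmem
          rw [pw_append_single (fun x y => w x y + φ y - φ x) v l' b, hlast'] at hDb
          rw [EReal.coe_le_coe_iff]
          have h3 : ((c - ((pathWeight (fun x y => w x y + φ y - φ x) (v :: l'))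
              + (w a b + φ b - φ a)) : ℝ) : EReal) ≤ max 0 ((c : EReal) - D b) := by
            calc ((c - ((pathWeight (fun x y => w x y + φ y - φ x) (v :: l'))
                + (w a b + φ b - φ a)) : ℝ) : EReal)
                = (c : EReal) - (((pathWeight (fun x y => w x y + φ y - φ x) (v :: l'))
                  + (w a b + φ b - φ a) : ℝ) : EReal) := by rw [← EReal.coe_sub]
              _ ≤ (c : EReal) - D b := EReal.sub_le_sub le_rfl hDb
              _ ≤ _ := le_max_right _ _
          have h4 : c - ((pathWeight (fun x y => w x y + φ y - φ x) (v :: l'))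
              + (w a b + φ b - φ a)) ≤ δb := by
            rw [hδb]
            have h5 := h3.trans (le_of_eq (hmcoe b).symm)
            exact_mod_cast h5
          linarith
        calc (c : EReal) - D a
            ≤ (c : EReal) - ((c - ((w a b + φ b - φ a) + δb) : ℝ) : EReal) :=
              EReal.sub_le_sub le_rfl hDa
          _ = (((w a b + φ b - φ a) + δb : ℝ) : EReal) := by
              rw [← EReal.coe_sub]; norm_num
    have final : (max 0 ((c : EReal) - D a)).toReal ≤ (w a b + φ b - φ a) + δb := by
      have := EReal.toReal_le_toReal key (hmbot a) (EReal.coe_ne_top _)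
      rwa [EReal.toReal_coe] at this
    rw [hφ' a, hφ' b, hw]
    linarith [final, hδb.le, hδb.ge]
end

section
/- Symmetrically, with φ feasible for (G,w), a weight decrease on edge (u,v) yielding negative-cycle-free w', the function φ'(x) = φ(x) - max{0, -w'_φ(u,v) - D(x)}, where D(x) is the shortest x-to-u path distance with respect to w_φ, is a feasible potential for (G, w'). -/
section Helpers
variable {V : Type*}

lemma pathWeight_cons (w : V → V → ℝ) (a b : V) (l : List V) :
    pathWeight w (a :: b :: l) = w a b + pathWeight w (b :: l) := by
  simp [pathWeight]

lemma pathWeight_nonneg (E : V → V → Prop) (w : V → V → ℝ)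
    (hw : ∀ a b, E a b → 0 ≤ w a b) :
    ∀ l : List V, l.Chain' E → 0 ≤ pathWeight w l
  | [], _ => by simp [pathWeight]
  | [a], _ => by simp [pathWeight]
  | a :: b :: l, h => by
      rw [show List.Chain' E (a :: b :: l) ↔ _ from List.isChain_cons_cons] at h
      have h1 := hw a b h.1
      have h2 := pathWeight_nonneg E w hw (b :: l) h.2
      rw [pathWeight_cons]; linarith

lemma pathWeight_telescope (w : V → V → ℝ) (φ : V → ℝ) :
    ∀ (l : List V) (a z : V), l.head? = some a → l.getLast? = some z →
      pathWeight (fun a b => w a b + φ b - φ a) l = pathWeight w l + φ z - φ a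
  | [], a, z, ha, _ => by simp at ha
  | [x], a, z, ha, hz => by
      simp only [List.head?_cons, Option.some.injEq] at ha
      simp only [List.getLast?_singleton, Option.some.injEq] at hz
      subst ha; subst hz; simp [pathWeight]
  | x :: y :: l, a, z, ha, hz => by
      simp only [List.head?_cons, Option.some.injEq] at ha
      subst ha
      rw [List.getLast?_cons_cons] at hz
      have ih := pathWeight_telescope w φ (y :: l) y z rfl hz
      rw [pathWeight_cons, pathWeight_cons, ih]; ring

lemma pathWeight_concat (w : V → V → ℝ) :
    ∀ (l : List V) (z x : V), l.getLast? = some z →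
      pathWeight w (l ++ [x]) = pathWeight w l + w z x
  | [], _, _, h => by simp at h
  | [a], z, x, h => by
      simp only [List.getLast?_singleton, Option.some.injEq] at h
      subst h; simp [pathWeight]
  | a :: b :: l, z, x, h => by
      rw [List.getLast?_cons_cons] at h
      have ih := pathWeight_concat w (b :: l) z x h
      simp only [List.cons_append] at ih ⊢
      rw [pathWeight_cons, pathWeight_cons, ih]; ring

lemma pathWeight_mono (w w' : V → V → ℝ) (h : ∀ a b, w' a b ≤ w a b) :
    ∀ l : List V, pathWeight w' l ≤ pathWeight w l
  | [] => by simp [pathWeight]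
  | [a] => by simp [pathWeight]
  | a :: b :: l => by
      rw [pathWeight_cons, pathWeight_cons]
      exact add_le_add (h a b) (pathWeight_mono w w' h (b :: l))

lemma ereal_coe_max (a b : ℝ) : ((max a b : ℝ) : EReal) = max (a : EReal) (b : EReal) := by
  rcases le_total a b with h | h
  · rw [max_eq_right h, max_eq_right (by exact_mod_cast h : (a:EReal) ≤ b)]
  · rw [max_eq_left h, max_eq_left (by exact_mod_cast h : (b:EReal) ≤ a)]

end Helpers

/-- Potential update after a weight decrease on edge `(u,v)` (mirrored version):
`φ'(x) = φ(x) - max{0, -w'_φ(u,v) - D(x)}` is feasible for `(G, w')`, where `D(x)`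
is the shortest `x`-to-`u` distance w.r.t. `w_φ` (`+∞` if unreachable). -/
theorem stmt7 {V : Type*} (E : V → V → Prop) (w : V → V → ℝ) (φ : V → ℝ)
    (hfeas : ∀ a b, E a b → 0 ≤ w a b + φ b - φ a)
    (u v : V) (he : E u v) (w' : V → V → ℝ)
    (hdec : w' u v ≤ w u v)
    (hw' : ∀ a b, ¬(a = u ∧ b = v) → w' a b = w a b)
    (hnoneg : Consistent E w')
    (D : V → EReal)
    (hD : ∀ x, D x = sInf {r : EReal | ∃ l, IsUVPath E x u l ∧
      ((pathWeight (fun a b => w a b + φ b - φ a) l : ℝ) : EReal) = r})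
    (φ' : V → ℝ)
    (hφ' : ∀ x, φ' x = φ x -
      (max 0 (((-(w' u v + φ v - φ u) : ℝ) : EReal) - D x)).toReal) :
    ∀ a b, E a b → 0 ≤ w' a b + φ' b - φ' a := by
  set wφ : V → V → ℝ := fun a b => w a b + φ b - φ a with hwφdef
  set c : ℝ := -(w' u v + φ v - φ u) with hcdef
  set m : V → ℝ := fun x => (max 0 ((c : EReal) - D x)).toReal with hmdef
  have hw'le : ∀ p q, w' p q ≤ w p q := by
    intro p q
    by_cases h : p = u ∧ q = v
    · obtain ⟨rfl, rfl⟩ := h; exact hdec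
    · rw [hw' p q h]
  have hwφ_nonneg : ∀ l : List V, l.Chain' E → 0 ≤ pathWeight wφ l :=
    pathWeight_nonneg E wφ (fun p q h => hfeas p q h)
  have hD0 : ∀ x, (0 : EReal) ≤ D x := by
    intro x; rw [hD]
    apply le_sInf
    rintro r ⟨l, hl, rfl⟩
    exact_mod_cast hwφ_nonneg l hl.2.1
  have hDne_bot : ∀ x, D x ≠ ⊥ := fun x => ne_of_gt (lt_of_lt_of_le (by simp : (⊥:EReal) < 0) (hD0 x))
  have hsub_le : ∀ x, (c : EReal) - D x ≤ (c : EReal) := by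
    intro x
    calc (c : EReal) - D x ≤ (c : EReal) - 0 := EReal.sub_le_sub (le_refl _) (hD0 x)
    _ = (c : EReal) := by simp
  have hmax_ne_top : ∀ x, max 0 ((c : EReal) - D x) ≠ ⊤ := by
    intro x
    apply ne_of_lt
    apply max_lt _ (lt_of_le_of_lt (hsub_le x) (EReal.coe_lt_top c))
    exact lt_of_le_of_lt (by exact_mod_cast (le_max_left 0 c) : (0:EReal) ≤ ((max 0 c : ℝ):EReal))
      (EReal.coe_lt_top _)
  have hm0 : ∀ x, 0 ≤ m x := by
    intro x
    have h := EReal.toReal_le_toReal (le_max_left 0 ((c : EReal) - D x))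
      (by simp) (hmax_ne_top x)
    simpa using h
  have hm_of_coe : ∀ (x : V) (d : ℝ), D x = (d : EReal) → m x = max 0 (c - d) := by
    intro x d h
    simp only [hmdef]
    rw [h, ← EReal.coe_sub, show (0 : EReal) = ((0:ℝ) : EReal) from rfl, ← ereal_coe_max,
      EReal.toReal_coe]
  intro a b hab
  rw [hφ' a, hφ' b]
  change 0 ≤ w' a b + (φ b - m b) - (φ a - m a)
  by_cases hab_uv : a = u ∧ b = v
  · obtain ⟨rfl, rfl⟩ := hab_uv
    by_cases hcpos : 0 < c
    · -- m a = c, m b = 0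
      have hDu_le : D a ≤ 0 := by
        rw [hD]
        refine sInf_le ⟨[a], ⟨by simp, by exact List.isChain_singleton a, rfl, rfl⟩, ?_⟩
        simp [pathWeight]
      have hDu : D a = 0 := le_antisymm hDu_le (hD0 a)
      have hmu : m a = c := by
        rw [hm_of_coe a 0 (by simpa using hDu)]
        simp [le_of_lt hcpos]
      have hDv : (c : EReal) ≤ D b := by
        rw [hD]
        apply le_sInf
        rintro r ⟨l, ⟨hne, hch, hhd, hlast⟩, rfl⟩
        have hcyc : IsCycle E (l ++ [b]) := by
          refine ⟨?_, ?_, ?_⟩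
          · rcases l with _ | ⟨x, t⟩
            · simp at hne
            · simp only [List.cons_append, List.length_cons, List.length_append]
              omega
          · rw [show List.Chain' E (l ++ [b]) ↔ _ from List.isChain_append]
            refine ⟨hch, by simp, ?_⟩
            intro x hx y hy
            rw [hlast] at hx
            simp at hx hy
            subst hx; subst hy; exact hab
          · rw [List.getLast?_concat, List.head?_append]
            rcases l with _ | ⟨x, t⟩
            · simp at hne
            · simp only [List.head?_cons, Option.or_some]
              have : (x :: t).head? = some b := hhd
              simpa using this
        have h0 := hnoneg _ hcyc
        rw [pathWeight_concat w' l a b hlast] at h0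
        have hmono := pathWeight_mono w w' hw'le l
        have htel := pathWeight_telescope w φ l b a hhd hlast
        show (c : EReal) ≤ ((pathWeight wφ l : ℝ) : EReal)
        rw [EReal.coe_le_coe_iff]
        rw [hwφdef, htel, hcdef]
        linarith
      have hmv : m b = 0 := by
        have h1 : (c : EReal) - D b ≤ 0 := by
          rcases eq_or_ne (D b) ⊤ with h | h
          · rw [h]; simp
          · have hcoe := EReal.coe_toReal h (hDne_bot b)
            rw [← hcoe] at hDv ⊢
            rw [← EReal.coe_sub]
            have h2 : c ≤ (D b).toReal := by exact_mod_cast hDv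
            exact_mod_cast sub_nonpos.mpr h2
        simp only [hmdef]
        rw [max_eq_left h1]; simp
      rw [hmu, hmv]
      simp only [hcdef] at *
      linarith
    · push_neg at hcpos
      have hm_eq0 : ∀ x, m x = 0 := by
        intro x
        have h1 : (c : EReal) - D x ≤ 0 := le_trans (hsub_le x) (by exact_mod_cast hcpos)
        simp only [hmdef]
        rw [max_eq_left h1]; simp
      rw [hm_eq0, hm_eq0]
      simp only [hcdef] at hcpos
      linarith
  · have hwab : w' a b = w a b := hw' a b hab_uv
    have hwφab : 0 ≤ w a b + φ b - φ a := hfeas a b hab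
    rw [hwab]
    suffices h : m b ≤ (w a b + φ b - φ a) + m a by linarith
    rcases eq_or_ne (D b) ⊤ with hDbtop | hDbtop
    · have hmb : m b = 0 := by
        simp only [hmdef]
        rw [hDbtop]
        simp
      rw [hmb]; exact add_nonneg hwφab (hm0 a)
    · set db := (D b).toReal with hdbdef
      have hDb : D b = (db : EReal) := (EReal.coe_toReal hDbtop (hDne_bot b)).symm
      have hdb0 : 0 ≤ db := by
        have := hD0 b; rw [hDb] at this; exact_mod_cast this
      have hmb : m b = max 0 (c - db) := hm_of_coe b db hDb
      rcases le_or_gt (c - db) 0 with hpos | hpos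
      · rw [hmb, max_eq_left hpos]
        exact add_nonneg hwφab (hm0 a)
      · rw [hmb, max_eq_right (le_of_lt hpos)]
        apply le_of_forall_pos_le_add
        intro ε hε
        have hlt : D b < ((db + ε : ℝ) : EReal) := by
          rw [hDb]; exact_mod_cast (by linarith : db < db + ε)
        rw [hD] at hlt
        obtain ⟨r, ⟨l, ⟨hne, hch, hhd, hlast⟩, rfl⟩, hr⟩ := sInf_lt_iff.mp hlt
        have hplt : pathWeight wφ l < db + ε := by exact_mod_cast hr
        obtain ⟨t, rfl⟩ : ∃ t, l = b :: t := by
          rcases l with _ | ⟨x, t⟩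
          · simp at hne
          · simp only [List.head?_cons, Option.some.injEq] at hhd
            subst hhd; exact ⟨t, rfl⟩
        have hpath : IsUVPath E a u (a :: b :: t) := by
          refine ⟨by simp, ?_, rfl, ?_⟩
          · rw [show List.Chain' E (a :: b :: t) ↔ _ from List.isChain_cons]
            exact ⟨by intro y hy; simp at hy; subst hy; exact hab, hch⟩
          · rw [List.getLast?_cons_cons]; exact hlast
        have hDa_le : D a ≤ ((pathWeight wφ (a :: b :: t) : ℝ) : EReal) := by
          rw [hD]; exact sInf_le ⟨_, hpath, rfl⟩
        have hDa_ne_top : D a ≠ ⊤ := ne_top_of_le_ne_top (EReal.coe_ne_top _) hDa_le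
        set da := (D a).toReal with hdadef
        have hDa : D a = (da : EReal) := (EReal.coe_toReal hDa_ne_top (hDne_bot a)).symm
        have hda_le : da ≤ pathWeight wφ (a :: b :: t) := by
          have := EReal.toReal_le_toReal hDa_le (hDne_bot a) (EReal.coe_ne_top _)
          simpa using this
        rw [pathWeight_cons] at hda_le
        have hma : c - da ≤ m a := by
          rw [hm_of_coe a da hDa]; exact le_max_right _ _
        have hwφab' : wφ a b = w a b + φ b - φ a := rfl
        rw [hwφab'] at hda_le
        linarith
end

section
/- A directed graph G has a consistent weight function assigning negative weights to exactly m - k edges (and positive weights to the other k edges, for suitably chosen magnitudes) if and only if there exists a set of k edges whose removal makes G acyclic. -/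
/-- pathWeight is additive in the weight function. -/
lemma pathWeight_add {V : Type*} (w1 w2 : V → V → ℝ) (l : List V) :
    pathWeight (fun a b => w1 a b + w2 a b) l = pathWeight w1 l + pathWeight w2 l := by
  unfold pathWeight
  induction l.zip l.tail with
  | nil => simp
  | cons p t ih => simp [ih]; ring

/-- telescoping sum. -/
lemma pathWeight_tele {V : Type*} (f : V → ℝ) :
    ∀ (l : List V) (a b : V), l.head? = some a → l.getLast? = some b →
      pathWeight (fun x y => f y - f x) l = f b - f a
  | [], a, b, ha, _ => by simp at ha
  | [x], a, b, ha, hb => by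
    simp at ha hb
    simp [pathWeight, ← ha, ← hb]
  | x :: y :: t, a, b, ha, hb => by
    have hy := pathWeight_tele f (y :: t) y b rfl (by
      rwa [List.getLast?_cons_cons] at hb)
    simp only [List.head?_cons, Option.some.injEq] at ha
    subst ha
    simp only [pathWeight, List.zip_cons_cons, List.tail_cons, List.map_cons,
      List.sum_cons] at hy ⊢
    rw [hy]; ring

lemma chain'_pairs {V : Type*} {R : V → V → Prop} :
    ∀ {l : List V}, l.Chain' R → ∀ p ∈ l.zip l.tail, R p.1 p.2
  | [], _, p, hp => by simp at hp
  | [x], _, p, hp => by simp at hp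
  | x :: y :: t, h, p, hp => by
    replace h := List.isChain_cons_cons.mp h
    simp only [List.tail_cons, List.zip_cons_cons, List.mem_cons] at hp
    rcases hp with rfl | hp
    · exact h.1
    · exact chain'_pairs h.2 p hp

lemma list_sum_nonpos : ∀ (L : List ℝ), (∀ x ∈ L, x ≤ 0) → L.sum ≤ 0
  | [], _ => by simp
  | x :: t, h => by
    have h1 : x ≤ 0 := h x (by simp)
    have h2 := list_sum_nonpos t (fun y hy => h y (by simp [hy]))
    simp only [List.sum_cons]
    linarith

lemma sum_neg_of_all_neg : ∀ (L : List ℝ), L ≠ [] → (∀ x ∈ L, x < 0) → L.sum < 0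
  | [], h, _ => absurd rfl h
  | x :: t, _, h => by
    have h1 : x < 0 := h x (by simp)
    have h2 : t.sum ≤ 0 := list_sum_nonpos t (fun y hy => le_of_lt (h y (by simp [hy])))
    simp only [List.sum_cons]
    linarith

/- There is a consistent weight function with exactly `m - k` negative edges (and
the other `k` edges positive) iff removing some `k` edges makes the graph acyclic. -/
open Classical in
theorem stmt12 {V : Type*} [Fintype V] [DecidableEq V]
    (E : Finset (V × V)) (k : ℕ) (hk : k ≤ E.card) :
    (∃ w : V × V → ℝ,
        Consistent (fun a b => (a, b) ∈ E) (fun a b => w (a, b)) ∧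
        (∀ e ∈ E, w e < 0 ∨ 0 < w e) ∧
        (E.filter (fun e => w e < 0)).card = E.card - k) ↔
      (∃ F ⊆ E, F.card = k ∧
        ¬∃ l, IsCycle (fun a b => (a, b) ∈ E ∧ (a, b) ∉ F) l) := by
  constructor
  · rintro ⟨w, hcons, _htri, hcard⟩
    refine ⟨E.filter (fun e => ¬ w e < 0), Finset.filter_subset _ _, ?_, ?_⟩
    · have := Finset.card_filter_add_card_filter_not (s := E)
        (p := fun e => w e < 0)
      omega
    · rintro ⟨l, hlen, hchain, hcl⟩
      have hzne : l.zip l.tail ≠ [] := by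
        have : (l.zip l.tail).length = min l.length l.tail.length := List.length_zip
        rw [List.length_tail] at this
        intro h
        rw [h] at this
        simp at this
        omega
      have hneg : pathWeight (fun a b => w (a, b)) l < 0 := by
        apply sum_neg_of_all_neg
        · simpa using hzne
        · intro x hx
          simp only [List.mem_map] at hx
          obtain ⟨p, hp, rfl⟩ := hx
          have := chain'_pairs hchain p hp
          have h1 : (p.1, p.2) ∈ E := this.1
          have h2 := this.2
          simp only [Finset.mem_filter, not_and, not_not] at h2
          by_contra hc
          exact absurd (h2 h1) (by push_neg at hc ⊢; exact hc)
      have : IsCycle (fun a b => (a, b) ∈ E) l :=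
        ⟨hlen, hchain.imp (fun a b h => h.1), hcl⟩
      linarith [hcons l this]
  · rintro ⟨F, hFE, hFk, hnc⟩
    set r : V → V → Prop := fun a b => (a, b) ∈ E ∧ (a, b) ∉ F with hr
    have hirr : ∀ a, ¬ Relation.TransGen r a a := by
      intro a ha
      apply hnc
      obtain ⟨b, hab, hba⟩ := Relation.TransGen.head'_iff.mp ha
      obtain ⟨l, hchain, hlast⟩ := List.exists_isChain_cons_of_relationReflTransGen hba
      refine ⟨a :: b :: l, by simp, ?_, ?_⟩
      · exact List.isChain_cons_cons.mpr ⟨hab, hchain⟩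
      · rw [List.getLast?_cons_cons, List.getLast?_eq_getLast (List.cons_ne_nil _ _)]
        simp [hlast]
    set p : V → ℕ := fun x => (Finset.univ.filter (fun y => Relation.TransGen r x y)).card
      with hp
    have hdec : ∀ a b, r a b → p b < p a := by
      intro a b hab
      apply Finset.card_lt_card
      rw [Finset.ssubset_iff_of_subset]
      · exact ⟨b, by simp [Relation.TransGen.single hab], by simp [hirr b]⟩
      · intro y hy
        simp only [Finset.mem_filter, Finset.mem_univ, true_and] at hy ⊢
        exact Relation.TransGen.head hab hy
    have hpN : ∀ x, p x ≤ Fintype.card V := by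
      intro x
      rw [← Finset.card_univ]
      exact Finset.card_le_univ _
    set C : ℝ := (Fintype.card V : ℝ) + 1 with hC
    refine ⟨fun e => (p e.2 : ℝ) - (p e.1 : ℝ) + (if e ∈ F then C else 0), ?_, ?_, ?_⟩
    · rintro l ⟨hlen, hchain, hcl⟩
      have hne : l ≠ [] := by intro h; rw [h] at hlen; simp at hlen
      obtain ⟨a, ha⟩ : ∃ a, l.head? = some a := by
        cases l with
        | nil => exact absurd rfl hne
        | cons x t => exact ⟨x, rfl⟩
      have hb : l.getLast? = some a := by rw [← hcl]; exact ha
      have := pathWeight_add (fun x y => ((p y : ℝ) - (p x : ℝ)))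
        (fun x y => if (x, y) ∈ F then C else 0) l
      have htele := pathWeight_tele (fun x => (p x : ℝ)) l a a ha hb
      have hnn : 0 ≤ pathWeight (fun x y => if (x, y) ∈ F then C else 0) l := by
        apply List.sum_nonneg
        intro x hx
        simp only [List.mem_map] at hx
        obtain ⟨q, _, rfl⟩ := hx
        split
        · rw [hC]; positivity
        · exact le_refl 0
      calc (0 : ℝ) ≤ 0 + pathWeight (fun x y => if (x, y) ∈ F then C else 0) l := by
              linarith
        _ = pathWeight (fun a b => (p b : ℝ) - (p a : ℝ) + (if (a, b) ∈ F then C else 0)) l := by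
              rw [this, htele]; ring
        _ = _ := rfl
    · intro e he
      by_cases hF : e ∈ F
      · right
        simp only [hF, if_pos]
        have h1 := hpN e.1
        have h2 : (0 : ℝ) ≤ (p e.2 : ℝ) := Nat.cast_nonneg _
        have h3 : (p e.1 : ℝ) ≤ (Fintype.card V : ℝ) := by exact_mod_cast h1
        rw [hC]; linarith
      · left
        simp only [hF, if_neg, not_false_iff, add_zero]
        have : p e.2 < p e.1 := hdec e.1 e.2 ⟨by rwa [Prod.mk.eta], by rwa [Prod.mk.eta]⟩
        have : (p e.2 : ℝ) < (p e.1 : ℝ) := by exact_mod_cast this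
        linarith
    · have hset : E.filter (fun e => ((p e.2 : ℝ) - (p e.1 : ℝ) +
          (if e ∈ F then C else 0)) < 0) = E \ F := by
        ext e
        simp only [Finset.mem_filter, Finset.mem_sdiff]
        constructor
        · rintro ⟨heE, hlt⟩
          refine ⟨heE, fun hF => ?_⟩
          simp only [hF, if_pos] at hlt
          have h1 := hpN e.1
          have h2 : (0 : ℝ) ≤ (p e.2 : ℝ) := Nat.cast_nonneg _
          have h3 : (p e.1 : ℝ) ≤ (Fintype.card V : ℝ) := by exact_mod_cast h1
          rw [hC] at hlt; linarith
        · rintro ⟨heE, hF⟩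
          refine ⟨heE, ?_⟩
          simp only [hF, if_neg, not_false_iff, add_zero]
          have : p e.2 < p e.1 := hdec e.1 e.2 ⟨by rwa [Prod.mk.eta], by rwa [Prod.mk.eta]⟩
          have : (p e.2 : ℝ) < (p e.1 : ℝ) := by exact_mod_cast this
          linarith
      rw [hset, Finset.card_sdiff_of_subset hFE, hFk]
end
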